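/- For n ≥ 3, let N_n be the necklace digraph: its vertex set is {v_j : j ∈ ℤ_{2n}} ∪ {w_k : k ∈ ℤ_n}, and its arcs are v_j v_{j+1} for all j ∈ ℤ_{2n}, together with v_{2k} w_k and v_{2k+2} w_k for all k ∈ ℤ_n. Then the Hermitian adjacency matrix H = H(N_n) satisfies H³ = 4H. -/

import Mathlib

open Matrix Complex

/-- Hermitian adjacency matrix of a digraph given by its arc relation `E`. -/
def hermAdj {V : Type*} (E : V → V → Prop) [DecidableRel E] : Matrix V V ℂ :=
  fun u v =>
    if E u v ∧ E v u then 1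
    else if E u v then Complex.I
    else if E v u then -Complex.I
    else 0

/-- The arc relation of the necklace digraph `N_n`: vertices are `v_j` (`j ∈ ℤ_{2n}`,
encoded as `Sum.inl j` with `j : Fin (2*n)`) and `w_k` (`k ∈ ℤ_n`, encoded as
`Sum.inr k`), with arcs `v_j → v_{j+1}`, `v_{2k} → w_k` and `v_{2k+2} → w_k`
(indices of `v`'s modulo `2n`, of `w`'s modulo `n`). -/
def necklace (n : ℕ) : (Fin (2 * n) ⊕ Fin n) → (Fin (2 * n) ⊕ Fin n) → Prop :=
  fun a b =>
    match a, b with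
    | Sum.inl j, Sum.inl j' => j'.val = (j.val + 1) % (2 * n)
    | Sum.inl j, Sum.inr k =>
        j.val = (2 * k.val) % (2 * n) ∨ j.val = (2 * k.val + 2) % (2 * n)
    | _, _ => False

instance (n : ℕ) : DecidableRel (necklace n) := fun a b =>
  match a, b with
  | Sum.inl j, Sum.inl j' => inferInstanceAs (Decidable (j'.val = (j.val + 1) % (2 * n)))
  | Sum.inl j, Sum.inr k =>
      inferInstanceAs
        (Decidable (j.val = (2 * k.val) % (2 * n) ∨ j.val = (2 * k.val + 2) % (2 * n)))
  | Sum.inr _, Sum.inl _ => inferInstanceAs (Decidable False)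
  | Sum.inr _, Sum.inr _ => inferInstanceAs (Decidable False)

def shiftM (m : ℕ) [NeZero m] : Matrix (Fin m) (Fin m) ℂ :=
  Matrix.of fun j j' => if j' = j + 1 then 1 else 0

def dmap (n : ℕ) : Fin n → Fin (2*n) := fun k => ⟨2*k.val, by have := k.isLt; omega⟩

def W0M (n : ℕ) : Matrix (Fin (2*n)) (Fin n) ℂ :=
  Matrix.of fun j k => if j = dmap n k then 1 else 0

def WM (n : ℕ) [NeZero (2*n)] : Matrix (Fin (2*n)) (Fin n) ℂ :=
  Matrix.of fun j k => if j = dmap n k ∨ j = dmap n k + 2 then 1 else 0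

def TM (n : ℕ) [NeZero (2*n)] : Matrix ((Fin (2*n)) ⊕ (Fin n)) ((Fin (2*n)) ⊕ (Fin n)) ℂ :=
  fromBlocks (shiftM (2*n) - (shiftM (2*n))ᵀ) (WM n) (-(WM n)ᵀ) 0

lemma shiftM_mul_transpose (m : ℕ) [NeZero m] : shiftM m * (shiftM m)ᵀ = 1 := by
  ext a b
  simp only [mul_apply, shiftM, transpose_apply, of_apply, one_apply, ite_mul, one_mul, zero_mul]
  rw [Finset.sum_ite_eq' Finset.univ (a+1) (fun x => if x = b + 1 then (1:ℂ) else 0)]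
  simp [add_left_inj, eq_comm]

lemma shiftM_transpose_mul (m : ℕ) [NeZero m] : (shiftM m)ᵀ * shiftM m = 1 :=
  mul_eq_one_comm.mp (shiftM_mul_transpose m)

lemma dmap_injective (n : ℕ) : Function.Injective (dmap n) := by
  intro a b h
  have : 2 * a.val = 2 * b.val := congrArg Fin.val h
  exact Fin.ext (by omega)

lemma W0_tmul (n : ℕ) : (W0M n)ᵀ * W0M n = 1 := by
  ext a b
  simp only [mul_apply, W0M, transpose_apply, of_apply, one_apply, ite_mul, one_mul, zero_mul]
  rw [Finset.sum_ite_eq' Finset.univ (dmap n a) (fun x => if x = dmap n b then (1:ℂ) else 0)]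
  simp only [Finset.mem_univ, if_true]
  by_cases h : a = b
  · simp [h]
  · simp [h]
    exact fun hc => h (dmap_injective n hc)

lemma val_two (n : ℕ) [NeZero (2*n)] (hn : 3 ≤ n) : ((2 : Fin (2*n)) : ℕ) = 2 := by
  show (2:ℕ) % (2*n) = 2
  exact Nat.mod_eq_of_lt (by omega)

lemma val_one2n (n : ℕ) [NeZero (2*n)] (hn : 3 ≤ n) : ((1 : Fin (2*n)) : ℕ) = 1 := by
  rw [Fin.val_one']; exact Nat.mod_eq_of_lt (by omega)

lemma val_dmap (n : ℕ) (k : Fin n) : (dmap n k).val = 2 * k.val := rfl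

lemma dsucc (n : ℕ) [NeZero n] [NeZero (2*n)] (hn : 3 ≤ n) (k : Fin n) :
    dmap n k + 2 = dmap n (k + 1) := by
  apply Fin.ext
  rw [Fin.val_add, val_two n hn, val_dmap, val_dmap, Fin.val_add, Fin.val_one']
  have hk := k.isLt
  have h1 : (1 : ℕ) % n = 1 := Nat.mod_eq_of_lt (by omega)
  rw [h1]
  rcases Nat.lt_or_ge (k.val + 1) n with h | h
  · rw [Nat.mod_eq_of_lt h, Nat.mod_eq_of_lt (by omega)]
    ring
  · have hkn : k.val + 1 = n := by omega
    have h2 : (2 * k.val + 2) % (2 * n) = 0 := by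
      have h3 : 2 * k.val + 2 = 2 * n := by omega
      rw [h3, Nat.mod_self]
    rw [hkn, Nat.mod_self, h2, Nat.mul_zero]

lemma sum_indicator_mul {α β : Type*} [Fintype α] [DecidableEq α] [NonAssocSemiring β]
    (c : α) (f : α → β) : (∑ j, (if j = c then 1 else 0) * f j) = f c := by
  simp [ite_mul, Finset.sum_ite_eq']

lemma sum_mul_indicator {α β : Type*} [Fintype α] [DecidableEq α] [NonAssocSemiring β]
    (c : α) (f : α → β) : (∑ j, f j * (if j = c then 1 else 0)) = f c := by
  simp [mul_ite, Finset.sum_ite_eq']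

section shiftlemmas
variable {m : ℕ} [NeZero m] {α : Type*}

lemma shiftM_mul_apply (M : Matrix (Fin m) α ℂ) (j : Fin m) (c : α) :
    (shiftM m * M) j c = M (j+1) c := by
  rw [mul_apply]
  simp only [shiftM, of_apply]
  exact sum_indicator_mul (j+1) (fun x => M x c)

lemma transpose_shiftM_mul_apply (M : Matrix (Fin m) α ℂ) (j : Fin m) (c : α) :
    ((shiftM m)ᵀ * M) j c = M (j-1) c := by
  rw [mul_apply]
  simp only [shiftM, transpose_apply, of_apply]
  have h : ∀ x : Fin m, (j = x + 1) ↔ (x = j - 1) := by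
    intro x
    constructor
    · rintro rfl; rw [add_sub_cancel_right]
    · rintro rfl; rw [sub_add_cancel]
  simp only [h]
  exact sum_indicator_mul (j-1) (fun x => M x c)

lemma mul_shiftM_apply (M : Matrix α (Fin m) ℂ) (r : α) (k : Fin m) :
    (M * shiftM m) r k = M r (k-1) := by
  rw [mul_apply]
  simp only [shiftM, of_apply]
  have h : ∀ x : Fin m, (k = x + 1) ↔ (x = k - 1) := by
    intro x
    constructor
    · rintro rfl; rw [add_sub_cancel_right]
    · rintro rfl; rw [sub_add_cancel]
  simp only [h]
  exact sum_mul_indicator (k-1) (fun x => M r x)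

lemma mul_transpose_shiftM_apply (M : Matrix α (Fin m) ℂ) (r : α) (k : Fin m) :
    (M * (shiftM m)ᵀ) r k = M r (k+1) := by
  rw [mul_apply]
  simp only [shiftM, transpose_apply, of_apply]
  exact sum_mul_indicator (k+1) (fun x => M r x)

end shiftlemmas

section rels
variable (n : ℕ) [NeZero n] [NeZero (2*n)]

lemma f6 (hn : 3 ≤ n) :
    shiftM (2*n) * (shiftM (2*n) * W0M n) = W0M n * shiftM n := by
  ext j k
  rw [shiftM_mul_apply, shiftM_mul_apply, mul_shiftM_apply]
  simp only [W0M, of_apply]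
  refine if_congr ?_ rfl rfl
  have h2 : dmap n (k-1) + 2 = dmap n k := by rw [dsucc n hn (k-1), sub_add_cancel]
  have h3 : j + 1 + 1 = j + 2 := by rw [add_assoc, show (1 : Fin (2*n)) + 1 = 2 by ext; simp [Fin.val_add]]
  rw [h3, ← h2, add_left_inj, eq_comm]

lemma val_dmap_add_one (hn : 3 ≤ n) (k : Fin n) : (dmap n k + 1).val = 2*k.val + 1 := by
  rw [Fin.val_add, val_one2n n hn, val_dmap]
  exact Nat.mod_eq_of_lt (by have := k.isLt; omega)

lemma f7 (hn : 3 ≤ n) : (W0M n)ᵀ * (shiftM (2*n) * W0M n) = 0 := by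
  ext k k'
  rw [mul_apply]
  have : ∀ j, ((W0M n)ᵀ k j) = (if j = dmap n k then (1:ℂ) else 0) := fun j => rfl
  simp_rw [this]
  rw [sum_indicator_mul (dmap n k) (fun j => (shiftM (2*n) * W0M n) j k'),
    shiftM_mul_apply]
  simp only [W0M, of_apply, Matrix.zero_apply]
  rw [if_neg]
  intro h
  have hv := congrArg Fin.val h
  rw [val_dmap_add_one n hn, val_dmap] at hv
  omega

lemma hE : W0M n * (W0M n)ᵀ =
    Matrix.of (fun j j' : Fin (2*n) => if j = j' ∧ j.val % 2 = 0 then (1:ℂ) else 0) := by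
  ext j j'
  rw [mul_apply]
  simp only [W0M, of_apply, transpose_apply]
  by_cases hj : j.val % 2 = 0
  · have hj2 : j.val / 2 < n := by have := j.isLt; omega
    set k0 : Fin n := ⟨j.val / 2, hj2⟩ with hk0
    have hk : ∀ k : Fin n, (j = dmap n k) ↔ (k = k0) := by
      intro k
      rw [Fin.ext_iff, Fin.ext_iff]
      show j.val = 2*k.val ↔ k.val = j.val/2
      omega
    simp only [hk]
    rw [sum_indicator_mul k0 (fun k => if j' = dmap n k then (1:ℂ) else 0)]
    have hj0 : dmap n k0 = j := by
      apply Fin.ext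
      show 2 * (j.val/2) = j.val
      omega
    rw [hj0]
    simp [hj, eq_comm]
  · have hz : ∀ k : Fin n, (if j = dmap n k then (1:ℂ) else 0) * (if j' = dmap n k then 1 else 0) = 0 := by
      intro k
      have : ¬(j = dmap n k) := by
        intro h
        have := congrArg Fin.val h
        rw [val_dmap] at this
        omega
      simp [this]
    rw [Finset.sum_congr rfl (fun k _ => hz k)]
    simp [hj]

lemma val_add_one (hn : 3 ≤ n) (j : Fin (2*n)) : (j + 1).val = (j.val + 1) % (2*n) := by
  rw [Fin.val_add, val_one2n n hn]

lemma parity_flip (hn : 3 ≤ n) (j : Fin (2*n)) : (j + 1).val % 2 ≠ j.val % 2 := by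
  rw [val_add_one n hn]
  have hj := j.isLt
  rcases Nat.lt_or_ge (j.val + 1) (2*n) with h | h
  · rw [Nat.mod_eq_of_lt h]; omega
  · have h2 : j.val + 1 = 2*n := by omega
    rw [h2, Nat.mod_self]; omega

lemma f8 (hn : 3 ≤ n) :
    W0M n * (W0M n)ᵀ * shiftM (2*n) + shiftM (2*n) * (W0M n * (W0M n)ᵀ) = shiftM (2*n) := by
  rw [hE]
  ext j j'
  rw [Matrix.add_apply, mul_shiftM_apply, shiftM_mul_apply]
  simp only [of_apply, shiftM]
  have hp := parity_flip n hn j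
  by_cases hjj : j' = j + 1
  · subst hjj
    have hsub : j + 1 - 1 = j := add_sub_cancel_right j 1
    by_cases hj : j.val % 2 = 0
    · rw [if_pos ⟨hsub.symm, hj⟩, if_neg (fun hc : _ ∧ _ => by have := hc.2; omega),
        if_pos rfl]
      norm_num
    · rw [if_neg (fun hc : _ ∧ _ => hj hc.2), if_pos ⟨rfl, by omega⟩, if_pos rfl]
      norm_num
  · have hne1 : ¬(j = j' - 1) := fun h => hjj (by rw [h, sub_add_cancel])
    rw [if_neg (fun hc : _ ∧ _ => hne1 hc.1), if_neg (fun hc : _ ∧ _ => hjj hc.1.symm),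
      if_neg hjj]
    norm_num

lemma one_ne_zero_fin (hn : 3 ≤ n) : (1 : Fin n) ≠ 0 := by
  intro h
  have := congrArg Fin.val h
  rw [Fin.val_one'] at this
  rw [Nat.mod_eq_of_lt (by omega)] at this
  simp at this

lemma hW (hn : 3 ≤ n) : WM n = W0M n * (1 + (shiftM n)ᵀ) := by
  rw [Matrix.mul_add, Matrix.mul_one]
  ext j k
  rw [Matrix.add_apply, mul_transpose_shiftM_apply]
  simp only [WM, W0M, of_apply, dsucc n hn k]
  by_cases h1 : j = dmap n k <;> by_cases h2 : j = dmap n (k+1)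
  · exfalso
    have := dmap_injective n (h1.symm.trans h2)
    exact one_ne_zero_fin n hn (by simpa using this.symm)
  · simp [h1, h2]
    exact fun hc => h2 (h1.trans hc)
  · simp [h1, h2]
    exact fun hc => h1 (h2.trans hc)
  · simp [h1, h2]

end rels

section bridge
variable (n : ℕ) [NeZero n] [NeZero (2*n)]

lemma L1 (hn : 3 ≤ n) (j j' : Fin (2*n)) :
    (j'.val = (j.val + 1) % (2*n)) ↔ j' = j + 1 := by
  rw [Fin.ext_iff, val_add_one n hn]

lemma L2 (hn : 3 ≤ n) (j j' : Fin (2*n)) : ¬(j' = j + 1 ∧ j = j' + 1) := by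
  rintro ⟨h1, h2⟩
  have hv1 := congrArg Fin.val h1
  have hv2 := congrArg Fin.val h2
  rw [val_add_one n hn] at hv1 hv2
  have hj := j.isLt
  have hj' := j'.isLt
  rcases Nat.lt_or_ge (j.val + 1) (2*n) with h | h
  · rw [Nat.mod_eq_of_lt h] at hv1
    rcases Nat.lt_or_ge (j'.val + 1) (2*n) with h' | h'
    · rw [Nat.mod_eq_of_lt h'] at hv2; omega
    · have : j'.val + 1 = 2*n := by omega
      rw [this, Nat.mod_self] at hv2; omega
  · have : j.val + 1 = 2*n := by omega
    rw [this, Nat.mod_self] at hv1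
    rcases Nat.lt_or_ge (j'.val + 1) (2*n) with h' | h'
    · rw [Nat.mod_eq_of_lt h'] at hv2; omega
    · have h2' : j'.val + 1 = 2*n := by omega
      rw [h2', Nat.mod_self] at hv2; omega

lemma val_dmap_add_two (hn : 3 ≤ n) (k : Fin n) :
    (dmap n k + 2).val = (2*k.val + 2) % (2*n) := by
  rw [Fin.val_add, val_two n hn, val_dmap]

lemma L3 (hn : 3 ≤ n) (j : Fin (2*n)) (k : Fin n) :
    (j.val = (2 * k.val) % (2 * n) ∨ j.val = (2 * k.val + 2) % (2 * n)) ↔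
      (j = dmap n k ∨ j = dmap n k + 2) := by
  have h1 : (2 * k.val) % (2 * n) = 2 * k.val := Nat.mod_eq_of_lt (by have := k.isLt; omega)
  rw [h1]
  constructor
  · rintro (h | h)
    · exact Or.inl (Fin.ext h)
    · exact Or.inr (Fin.ext (by rw [val_dmap_add_two n hn, ← h]))
  · rintro (h | h)
    · exact Or.inl (congrArg Fin.val h)
    · exact Or.inr (by rw [h, val_dmap_add_two n hn])

lemma nodigon (hn : 3 ≤ n) : ∀ a b, ¬(necklace n a b ∧ necklace n b a) := by
  rintro (j | k) (j' | k') ⟨h1, h2⟩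
  · exact L2 n hn j j' ⟨(L1 n hn j j').mp h1, (L1 n hn j' j).mp h2⟩
  · exact h2
  · exact h1
  · exact h1

lemma hermAdj_eq_ind {V : Type*} (E : V → V → Prop) [DecidableRel E]
    (h : ∀ a b, ¬(E a b ∧ E b a)) :
    hermAdj E = Matrix.of fun u v =>
      (if E u v then Complex.I else 0) - (if E v u then Complex.I else 0) := by
  ext u v
  simp only [hermAdj, of_apply]
  by_cases h1 : E u v <;> by_cases h2 : E v u
  · exact absurd ⟨h1, h2⟩ (h u v)
  · simp [h1, h2]
  · simp [h1, h2]
  · simp [h1, h2]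

lemma hH (hn : 3 ≤ n) : hermAdj (necklace n) = Complex.I • TM n := by
  rw [hermAdj_eq_ind (necklace n) (nodigon n hn)]
  ext a b
  rcases a with j | k <;> rcases b with j' | k'
  · simp only [of_apply, Matrix.smul_apply, TM, fromBlocks_apply₁₁, Matrix.sub_apply,
      transpose_apply, shiftM, smul_eq_mul, necklace, L1 n hn]
    by_cases h1 : j' = j + 1 <;> by_cases h2 : j = j' + 1
    · exact absurd ⟨h1, h2⟩ (L2 n hn j j')
    · rw [if_pos h1, if_neg h2, if_pos h1, if_neg h2]; ring
    · rw [if_neg h1, if_pos h2, if_neg h1, if_pos h2]; ring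
    · rw [if_neg h1, if_neg h2, if_neg h1, if_neg h2]; ring
  · simp only [of_apply, Matrix.smul_apply, TM, fromBlocks_apply₁₂, WM, smul_eq_mul,
      necklace, L3 n hn]
    by_cases h1 : j = dmap n k' ∨ j = dmap n k' + 2 <;> simp [h1]
  · simp only [of_apply, Matrix.smul_apply, TM, fromBlocks_apply₂₁, Matrix.neg_apply,
      transpose_apply, WM, smul_eq_mul, necklace, L3 n hn]
    by_cases h1 : j' = dmap n k ∨ j' = dmap n k + 2 <;> simp [h1]
  · simp only [of_apply, Matrix.smul_apply, TM, fromBlocks_apply₂₂, Matrix.zero_apply,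
      smul_eq_mul, necklace]
    simp

end bridge

section algebra

lemma mcancel {m k α : Type*} [Fintype m] [Fintype k] [DecidableEq m] {A : Matrix m k ℂ}
    {B : Matrix k m ℂ} (h : A * B = 1)
    (X : Matrix m α ℂ) : A * (B * X) = X := by
  rw [← Matrix.mul_assoc, h, Matrix.one_mul]

variable (n : ℕ) [NeZero n] [NeZero (2*n)]

-- more entrywise helpers
lemma f6t (hn : 3 ≤ n) :
    (shiftM (2*n))ᵀ * ((shiftM (2*n))ᵀ * W0M n) = W0M n * (shiftM n)ᵀ := by
  ext j k
  rw [transpose_shiftM_mul_apply, transpose_shiftM_mul_apply, mul_transpose_shiftM_apply]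
  simp only [W0M, of_apply]
  refine if_congr ?_ rfl rfl
  constructor
  · intro h
    have : j = dmap n k + 1 + 1 := by
      rw [← h, sub_add_cancel, sub_add_cancel]
    rw [this, add_assoc, show (1 : Fin (2*n)) + 1 = 2 by ext; simp [Fin.val_add], dsucc n hn]
  · intro h
    rw [h, ← dsucc n hn]
    rw [show dmap n k + 2 = dmap n k + 1 + 1 by rw [add_assoc, show (1 : Fin (2*n)) + 1 = 2 by ext; simp [Fin.val_add]]]
    rw [add_sub_cancel_right, add_sub_cancel_right]

lemma f7t (hn : 3 ≤ n) : (W0M n)ᵀ * ((shiftM (2*n))ᵀ * W0M n) = 0 := by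
  ext k k'
  rw [mul_apply]
  have : ∀ j, ((W0M n)ᵀ k j) = (if j = dmap n k then (1:ℂ) else 0) := fun j => rfl
  simp_rw [this]
  rw [sum_indicator_mul (dmap n k) (fun j => ((shiftM (2*n))ᵀ * W0M n) j k'),
    transpose_shiftM_mul_apply]
  simp only [W0M, of_apply, Matrix.zero_apply]
  rw [if_neg]
  intro h
  have h2 : dmap n k = dmap n k' + 1 := by rw [← h, sub_add_cancel]
  have hv := congrArg Fin.val h2
  rw [val_dmap, val_dmap_add_one n hn] at hv
  omega

lemma f8t (hn : 3 ≤ n) :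
    W0M n * (W0M n)ᵀ * (shiftM (2*n))ᵀ + (shiftM (2*n))ᵀ * (W0M n * (W0M n)ᵀ)
      = (shiftM (2*n))ᵀ := by
  rw [hE]
  ext j j'
  rw [Matrix.add_apply, mul_transpose_shiftM_apply, transpose_shiftM_mul_apply]
  simp only [of_apply, shiftM, transpose_apply]
  have hp := parity_flip n hn j'
  by_cases hjj : j = j' + 1
  · subst hjj
    have hsub : j' + 1 - 1 = j' := add_sub_cancel_right j' 1
    by_cases hj : (j'+1).val % 2 = 0
    · rw [if_pos ⟨rfl, hj⟩, if_neg (fun hc : _ ∧ _ => by have := hc.2; rw [hsub] at this; omega),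
        if_pos rfl]
      norm_num
    · rw [if_neg (fun hc : _ ∧ _ => hj hc.2), if_pos ⟨hsub, by rw [hsub]; omega⟩, if_pos rfl]
      norm_num
  · have hne1 : ¬(j - 1 = j') := fun h => hjj (by rw [← h, sub_add_cancel])
    rw [if_neg (fun hc : _ ∧ _ => hjj hc.1), if_neg (fun hc : _ ∧ _ => hne1 hc.1),
      if_neg hjj]
    norm_num

end algebra

section main
variable (n : ℕ) [NeZero n] [NeZero (2*n)] {α : Type*}

local notation "RR" => shiftM (2*n)
local notation "QQ" => shiftM n
local notation "W₀" => W0M n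

lemma e1 (X : Matrix (Fin (2*n)) α ℂ) : RR * (RRᵀ * X) = X := mcancel (shiftM_mul_transpose _) X
lemma e2 (X : Matrix (Fin (2*n)) α ℂ) : RRᵀ * (RR * X) = X := mcancel (shiftM_transpose_mul _) X
lemma e3 (X : Matrix (Fin n) α ℂ) : QQ * (QQᵀ * X) = X := mcancel (shiftM_mul_transpose _) X
lemma e4 (X : Matrix (Fin n) α ℂ) : QQᵀ * (QQ * X) = X := mcancel (shiftM_transpose_mul _) X
lemma e5 (X : Matrix (Fin n) α ℂ) : W₀ᵀ * (W₀ * X) = X := mcancel (W0_tmul n) X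

lemma e6' (hn : 3 ≤ n) (X : Matrix (Fin n) α ℂ) :
    RR * (RR * (W₀ * X)) = W₀ * (QQ * X) := by
  have := congrArg (fun M => M * X) (f6 n hn)
  simpa [Matrix.mul_assoc] using this

lemma e7' (hn : 3 ≤ n) (X : Matrix (Fin n) α ℂ) :
    RRᵀ * (RRᵀ * (W₀ * X)) = W₀ * (QQᵀ * X) := by
  have := congrArg (fun M => M * X) (f6t n hn)
  simpa [Matrix.mul_assoc] using this

lemma e8' (hn : 3 ≤ n) (X : Matrix (Fin n) α ℂ) :
    W₀ᵀ * (RR * (W₀ * X)) = 0 := by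
  have := congrArg (fun M => M * X) (f7 n hn)
  simpa [Matrix.mul_assoc] using this

lemma e9' (hn : 3 ≤ n) (X : Matrix (Fin n) α ℂ) :
    W₀ᵀ * (RRᵀ * (W₀ * X)) = 0 := by
  have := congrArg (fun M => M * X) (f7t n hn)
  simpa [Matrix.mul_assoc] using this

lemma g1' (hn : 3 ≤ n) (X : Matrix (Fin n) α ℂ) :
    W₀ * (QQ * X) = RR * (RR * (W₀ * X)) := (e6' n hn X).symm

lemma g2' (hn : 3 ≤ n) (X : Matrix (Fin n) α ℂ) :
    W₀ * (QQᵀ * X) = RRᵀ * (RRᵀ * (W₀ * X)) := (e7' n hn X).symm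

lemma g1b (hn : 3 ≤ n) : W₀ * QQ = RR * (RR * W₀) := (f6 n hn).symm
lemma g2b (hn : 3 ≤ n) : W₀ * QQᵀ = RRᵀ * (RRᵀ * W₀) := (f6t n hn).symm

lemma pE' (hn : 3 ≤ n) (X : Matrix (Fin (2*n)) α ℂ) :
    W₀ * (W₀ᵀ * (RR * X)) = RR * X - RR * (W₀ * (W₀ᵀ * X)) := by
  have := congrArg (fun M => M * X) (f8 n hn)
  simp only [Matrix.add_mul, Matrix.mul_assoc] at this
  exact eq_sub_of_add_eq this

lemma pEb (hn : 3 ≤ n) : W₀ * (W₀ᵀ * RR) = RR - RR * (W₀ * W₀ᵀ) := by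
  have := f8 n hn
  rw [Matrix.mul_assoc] at this
  exact eq_sub_of_add_eq this

lemma pEt' (hn : 3 ≤ n) (X : Matrix (Fin (2*n)) α ℂ) :
    W₀ * (W₀ᵀ * (RRᵀ * X)) = RRᵀ * X - RRᵀ * (W₀ * (W₀ᵀ * X)) := by
  have := congrArg (fun M => M * X) (f8t n hn)
  simp only [Matrix.add_mul, Matrix.mul_assoc] at this
  exact eq_sub_of_add_eq this

lemma pEtb (hn : 3 ≤ n) : W₀ * (W₀ᵀ * RRᵀ) = RRᵀ - RRᵀ * (W₀ * W₀ᵀ) := by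
  have := f8t n hn
  rw [Matrix.mul_assoc] at this
  exact eq_sub_of_add_eq this

lemma hWt (hn : 3 ≤ n) : (WM n)ᵀ = (1 + QQ) * W₀ᵀ := by
  rw [hW n hn, transpose_mul, transpose_add, transpose_one, transpose_transpose]

lemma keyd (hn : 3 ≤ n) : (WM n)ᵀ * ((RR - RRᵀ) * WM n) = 0 := by
  rw [hWt n hn, hW n hn]
  simp only [Matrix.mul_add, Matrix.add_mul, Matrix.mul_sub, Matrix.sub_mul,
    Matrix.mul_one, Matrix.one_mul, Matrix.mul_assoc, e8' n hn, e9' n hn,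
    f7 n hn, f7t n hn, Matrix.mul_zero, Matrix.zero_mul, add_zero, zero_add,
    sub_zero, zero_sub, neg_zero]

lemma key2 (hn : 3 ≤ n) :
    (RR - RRᵀ) * ((RR - RRᵀ) * WM n) - WM n * ((WM n)ᵀ * WM n) = (-4:ℂ) • WM n := by
  rw [hWt n hn, hW n hn]
  simp only [Matrix.mul_add, Matrix.add_mul, Matrix.mul_sub, Matrix.sub_mul,
    Matrix.mul_one, Matrix.one_mul, Matrix.mul_assoc,
    e1 n, e2 n, e3 n, e4 n, e5 n, e6' n hn, e7' n hn, f6 n hn, f6t n hn,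
    shiftM_mul_transpose, shiftM_transpose_mul, W0_tmul, Matrix.mul_zero,
    Matrix.zero_mul, add_zero, zero_add, sub_zero, zero_sub]
  module

lemma key11 (hn : 3 ≤ n) :
    (RR - RRᵀ) * ((RR - RRᵀ) * (RR - RRᵀ) - WM n * (WM n)ᵀ)
      - WM n * ((WM n)ᵀ * (RR - RRᵀ)) = (-4:ℂ) • (RR - RRᵀ) := by
  rw [hWt n hn, hW n hn]
  simp only [Matrix.mul_add, Matrix.add_mul, Matrix.mul_sub, Matrix.sub_mul,
    Matrix.mul_one, Matrix.one_mul, Matrix.mul_assoc,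
    g1' n hn, g2' n hn, g1b n hn, g2b n hn, e1 n, e2 n,
    shiftM_mul_transpose, shiftM_transpose_mul,
    pE' n hn, pEb n hn, pEt' n hn, pEtb n hn, Matrix.mul_zero,
    Matrix.zero_mul, add_zero, zero_add, sub_zero, zero_sub]
  module

lemma t1' (hn : 3 ≤ n) (X : Matrix (Fin (2*n)) α ℂ) :
    W₀ᵀ * (RR * (RR * X)) = QQ * (W₀ᵀ * X) := by
  have h := congrArg Matrix.transpose (f6t n hn)
  simp only [transpose_mul, transpose_transpose] at h
  have := congrArg (fun M => M * X) h
  simpa [Matrix.mul_assoc] using this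

lemma t1b (hn : 3 ≤ n) : W₀ᵀ * (RR * RR) = QQ * W₀ᵀ := by
  have h := congrArg Matrix.transpose (f6t n hn)
  simp only [transpose_mul, transpose_transpose] at h
  simpa [Matrix.mul_assoc] using h

lemma t2' (hn : 3 ≤ n) (X : Matrix (Fin (2*n)) α ℂ) :
    W₀ᵀ * (RRᵀ * (RRᵀ * X)) = QQᵀ * (W₀ᵀ * X) := by
  have h := congrArg Matrix.transpose (f6 n hn)
  simp only [transpose_mul, transpose_transpose] at h
  have := congrArg (fun M => M * X) h
  simpa [Matrix.mul_assoc] using this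

lemma t2b (hn : 3 ≤ n) : W₀ᵀ * (RRᵀ * RRᵀ) = QQᵀ * W₀ᵀ := by
  have h := congrArg Matrix.transpose (f6 n hn)
  simp only [transpose_mul, transpose_transpose] at h
  simpa [Matrix.mul_assoc] using h

lemma key21 (hn : 3 ≤ n) :
    (WM n)ᵀ * ((RR - RRᵀ) * (RR - RRᵀ) - WM n * (WM n)ᵀ) = (-4:ℂ) • (WM n)ᵀ := by
  rw [hWt n hn, hW n hn]
  simp only [Matrix.mul_add, Matrix.add_mul, Matrix.mul_sub, Matrix.sub_mul,
    Matrix.mul_one, Matrix.one_mul, Matrix.mul_assoc,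
    e1 n, e2 n, e3 n, e4 n, e5 n, t1' n hn, t2' n hn, t1b n hn, t2b n hn,
    shiftM_mul_transpose, shiftM_transpose_mul, W0_tmul, Matrix.mul_zero,
    Matrix.zero_mul, add_zero, zero_add, sub_zero, zero_sub]
  module

lemma Tcube (hn : 3 ≤ n) : TM n * (TM n * TM n) = (-4:ℂ) • TM n := by
  rw [TM, fromBlocks_multiply, fromBlocks_multiply, fromBlocks_smul, fromBlocks_inj]
  refine ⟨?_, ?_, ?_, ?_⟩
  · simp only [Matrix.mul_neg, Matrix.neg_mul, Matrix.zero_mul, Matrix.mul_zero,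
      add_zero, sub_zero, ← sub_eq_add_neg]
    exact key11 n hn
  · simp only [Matrix.mul_zero, add_zero, Matrix.neg_mul, Matrix.mul_neg,
      ← sub_eq_add_neg]
    exact key2 n hn
  · simp only [Matrix.neg_mul, Matrix.mul_neg, Matrix.zero_mul, Matrix.mul_zero,
      add_zero, ← sub_eq_add_neg, smul_neg]
    rw [neg_inj]
    exact key21 n hn
  · simp only [Matrix.mul_zero, add_zero, Matrix.zero_mul, smul_zero, Matrix.neg_mul]
    rw [keyd n hn, neg_zero]

end main

/-- For `n ≥ 3`, the Hermitian adjacency matrix of the necklace digraph `N_n`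
satisfies `H³ = 4H`. -/
theorem stmt14 (n : ℕ) (hn : 3 ≤ n) :
    hermAdj (necklace n) ^ 3 = (4 : ℂ) • hermAdj (necklace n) := by
  haveI : NeZero n := ⟨by omega⟩
  haveI : NeZero (2*n) := ⟨by omega⟩
  rw [hH n hn, smul_pow]
  rw [show (TM n)^3 = TM n * (TM n * TM n) by
    rw [pow_succ, pow_succ, pow_one, Matrix.mul_assoc]]
  rw [Tcube n hn, smul_smul, smul_smul]
  congr 1
  simp [pow_succ, Complex.I_mul_I]
  ring
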